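/- Let q ≥ 1 and let n ∈ ℕ^q be nonzero. Then every multiset p of nonzero tuples in ℕ^q × ℕ satisfying (0,1) ∉ p and p ⊢ (n, |p| − 1) has at most 2|n| − 1 elements (counted with multiplicity); consequently, for each nonzero n there are only finitely many such multisets p. -/
import Mathlib


namespace ImplicitDD

lemma sum_apply_aux {q : ℕ} (p : Multiset ((Fin q → ℕ) × ℕ)) (j : Fin q) :
    (p.map Prod.fst).sum j = (p.map (fun e => e.1 j)).sum := by
  induction p using Multiset.induction with
  | empty => simp
  | cons a s ih => simp [ih]

lemma sum_finsum_aux {q : ℕ} (p : Multiset ((Fin q → ℕ) × ℕ)) :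
    (p.map (fun e => ∑ j, e.1 j)).sum = ∑ j, (p.map Prod.fst).sum j := by
  induction p using Multiset.induction with
  | empty => simp
  | cons a s ih => simp [ih, Finset.sum_add_distrib]


/-- For `q ≥ 1` and nonzero `n ∈ ℕ^q`, every multiset `p` of nonzero tuples
in `ℕ^q × ℕ` with `(0,1) ∉ p` and `p ⊢ (n, |p| − 1)` has at most `2|n| − 1` elements (counted
with multiplicity); consequently there are only finitely many such multisets `p`. -/
theorem partition_bound_and_finiteness (q : ℕ) (hq : 1 ≤ q) (n : Fin q → ℕ)
    (hn : n ≠ fun _ => 0) :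
    (∀ p : Multiset ((Fin q → ℕ) × ℕ),
      (∀ e ∈ p, e ≠ ((fun _ => 0 : Fin q → ℕ), 0)) →
      ((fun _ => 0 : Fin q → ℕ), 1) ∉ p →
      (p.map Prod.fst).sum = n →
      (p.map Prod.snd).sum + 1 = Multiset.card p →
      Multiset.card p ≤ 2 * (∑ j, n j) - 1) ∧
    {p : Multiset ((Fin q → ℕ) × ℕ) |
      (∀ e ∈ p, e ≠ ((fun _ => 0 : Fin q → ℕ), 0)) ∧
      ((fun _ => 0 : Fin q → ℕ), 1) ∉ p ∧
      (p.map Prod.fst).sum = n ∧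
      (p.map Prod.snd).sum + 1 = Multiset.card p}.Finite := by
  have key : ∀ p : Multiset ((Fin q → ℕ) × ℕ),
      (∀ e ∈ p, e ≠ ((fun _ => 0 : Fin q → ℕ), 0)) →
      ((fun _ => 0 : Fin q → ℕ), 1) ∉ p →
      (p.map Prod.fst).sum = n →
      (p.map Prod.snd).sum + 1 = Multiset.card p →
      Multiset.card p ≤ 2 * (∑ j, n j) - 1 := by
    intro p h0 h1 hfst hsnd
    have hb : ∀ e ∈ p, 2 ≤ 2 * (∑ j, e.1 j) + e.2 := by
      intro e he
      by_cases h : e.1 = fun _ => 0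
      · have h2 : e.2 ≠ 0 := by
          intro h2
          exact h0 e he (Prod.ext h h2)
        have h3 : e.2 ≠ 1 := by
          intro h3
          apply h1
          have : e = ((fun _ => 0 : Fin q → ℕ), 1) := Prod.ext h h3
          rwa [← this]
        omega
      · have : ∃ j, e.1 j ≠ 0 := by
          by_contra hc; push_neg at hc; exact h (funext hc)
        obtain ⟨j, hj⟩ := this
        have h1j : 1 ≤ e.1 j := Nat.one_le_iff_ne_zero.mpr hj
        have : e.1 j ≤ ∑ j, e.1 j :=
          Finset.single_le_sum (f := e.1) (fun _ _ => Nat.zero_le _) (Finset.mem_univ j)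
        omega
    have hsum : Multiset.card p * 2 ≤ (p.map (fun e => 2 * (∑ j, e.1 j) + e.2)).sum := by
      have := Multiset.card_nsmul_le_sum (s := p.map (fun e => 2 * (∑ j, e.1 j) + e.2))
        (a := 2) (fun x hx => by obtain ⟨e, he, rfl⟩ := Multiset.mem_map.mp hx; exact hb e he)
      simpa [smul_eq_mul] using this
    have hsplit : (p.map (fun e => 2 * (∑ j, e.1 j) + e.2)).sum
        = 2 * (∑ j, n j) + (p.map Prod.snd).sum := by
      rw [Multiset.sum_map_add]
      congr 1
      rw [Multiset.sum_map_mul_left]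
      rw [sum_finsum_aux]
      simp [hfst]
    omega
  refine ⟨key, ?_⟩
  set N := 2 * (∑ j, n j) with hN
  set E : Finset ((Fin q → ℕ) × ℕ) :=
    Finset.image (fun fb : (Fin q → Fin (N+1)) × Fin (N+1) =>
      ((fun j => (fb.1 j : ℕ)), (fb.2 : ℕ))) Finset.univ with hE
  set M : Multiset ((Fin q → ℕ) × ℕ) := N • E.val with hM
  apply Set.Finite.subset (M.powerset.toFinset.finite_toSet)
  intro p hp
  obtain ⟨h0, h1, hfst, hsnd⟩ := hp
  have hcard : Multiset.card p ≤ N := by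
    have := key p h0 h1 hfst hsnd
    omega
  have hle : p ≤ M := by
    rw [Multiset.le_iff_count]
    intro e
    by_cases he : e ∈ p
    · have heE : e ∈ E := by
        have hfb1 : ∀ j, e.1 j < N + 1 := by
          intro j
          have h1 : e.1 j ≤ (p.map (fun x => x.1 j)).sum :=
            Multiset.single_le_sum (fun _ _ => Nat.zero_le _) _
              (Multiset.mem_map_of_mem _ he)
          have h2 : (p.map (fun x => x.1 j)).sum = n j := by
            rw [← sum_apply_aux, hfst]
          have h3 : n j ≤ ∑ j, n j :=
            Finset.single_le_sum (f := n) (fun _ _ => Nat.zero_le _) (Finset.mem_univ j)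
          omega
        have hfb2 : e.2 < N + 1 := by
          have h1 : e.2 ≤ (p.map Prod.snd).sum :=
            Multiset.single_le_sum (fun _ _ => Nat.zero_le _) _
              (Multiset.mem_map_of_mem _ he)
          omega
        rw [hE, Finset.mem_image]
        exact ⟨((fun j => ⟨e.1 j, hfb1 j⟩), ⟨e.2, hfb2⟩), Finset.mem_univ _, by simp⟩
      have h1 : Multiset.count e p ≤ Multiset.card p := Multiset.count_le_card _ _
      have h2 : Multiset.count e M = N * Multiset.count e E.val := by
        rw [hM, Multiset.count_nsmul]
      have h3 : 1 ≤ Multiset.count e E.val := by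
        rw [Multiset.one_le_count_iff_mem]
        exact heE
      calc Multiset.count e p ≤ N := le_trans h1 hcard
      _ = N * 1 := by ring
      _ ≤ N * Multiset.count e E.val := Nat.mul_le_mul_left _ h3
      _ = Multiset.count e M := h2.symm
    · simp [Multiset.count_eq_zero_of_notMem he]
  simp only [Finset.coe_sort_coe, Set.mem_setOf_eq, Finset.mem_coe, Multiset.mem_toFinset,
    Multiset.mem_powerset]
  exact hle

end ImplicitDD
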